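/- Let z < 0 be real, A, B ∈ ℂ^{N×N} with B Hermitian positive semidefinite, and v ∈ ℂ^N. Then |tr[((B − zI)⁻¹ − (B + v v^H − zI)⁻¹) A]| ≤ ‖A‖ / |z|, where ‖A‖ is the spectral (operator) norm of A. -/

import Mathlib

open Matrix
open scoped Matrix.Norms.L2Operator ComplexOrder

private lemma aux_star_dot {N : ℕ} (x y : Fin N → ℂ) :
    star x ⬝ᵥ y = starRingEnd ℂ (star y ⬝ᵥ x) := by
  simp [dotProduct, map_sum, mul_comm]

private lemma aux_vecMulVec_mulVec {N : ℕ} (v w u : Fin N → ℂ) :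
    (vecMulVec v w) *ᵥ u = (w ⬝ᵥ u) • v := by
  funext i
  simp [mulVec, dotProduct, vecMulVec_apply, Finset.mul_sum, Finset.sum_mul, mul_comm,
    mul_left_comm]

private lemma aux_trace_vecMulVec_mul {N : ℕ} (v w : Fin N → ℂ)
    (M : Matrix (Fin N) (Fin N) ℂ) :
    ((vecMulVec v w) * M).trace = w ⬝ᵥ (M *ᵥ v) := by
  simp only [trace, diag_apply, mul_apply, vecMulVec_apply, dotProduct, mulVec]
  rw [Finset.sum_comm]
  refine Finset.sum_congr rfl fun j _ => ?_
  rw [Finset.mul_sum]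
  refine Finset.sum_congr rfl fun i _ => by ring

private lemma aux_vecMulVec_posSemidef {N : ℕ} (v : Fin N → ℂ) :
    (vecMulVec v (star v)).PosSemidef := by
  refine PosSemidef.of_dotProduct_mulVec_nonneg ?_ ?_
  · ext i j
    simp [conjTranspose_apply, vecMulVec_apply, mul_comm]
  · intro x
    rw [aux_vecMulVec_mulVec, dotProduct_smul, smul_eq_mul]
    have h : star x ⬝ᵥ v = starRingEnd ℂ (star v ⬝ᵥ x) := aux_star_dot x v
    rw [h]
    simpa [mul_comm] using star_mul_self_nonneg (star v ⬝ᵥ x)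

theorem rank_one_perturbation_lemma
    {N : ℕ} (z : ℝ) (hz : z < 0)
    (A B : Matrix (Fin N) (Fin N) ℂ) (hB : B.PosSemidef)
    (v : Fin N → ℂ) :
    ‖(((B - (z : ℂ) • (1 : Matrix (Fin N) (Fin N) ℂ))⁻¹ -
        (B + vecMulVec v (star v) - (z : ℂ) • (1 : Matrix (Fin N) (Fin N) ℂ))⁻¹) * A).trace‖
      ≤ ‖A‖ / |z| := by
  classical
  set W : Matrix (Fin N) (Fin N) ℂ := vecMulVec v (star v) with hWdef
  set M1 : Matrix (Fin N) (Fin N) ℂ := B - (z : ℂ) • 1 with hM1def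
  set M2 : Matrix (Fin N) (Fin N) ℂ := B + W - (z : ℂ) • 1 with hM2def
  have hWpsd : W.PosSemidef := aux_vecMulVec_posSemidef v
  -- positive definiteness
  have hzpd : ((-z : ℂ) • (1 : Matrix (Fin N) (Fin N) ℂ)).PosDef := by
    rw [smul_one_eq_diagonal]
    refine posDef_diagonal_iff.mpr fun i => ?_
    have : (0 : ℝ) < -z := by linarith
    exact_mod_cast Complex.real_lt_real.mpr this
  have pd1 : M1.PosDef := by
    have : M1 = B + (-z : ℂ) • 1 := by
      rw [hM1def, sub_eq_add_neg, ← neg_smul]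
    rw [this]
    exact Matrix.PosDef.posSemidef_add hB hzpd
  have pd2 : M2.PosDef := by
    have : M2 = (B + W) + (-z : ℂ) • 1 := by
      rw [hM2def, sub_eq_add_neg, ← neg_smul]
    rw [this]
    exact Matrix.PosDef.posSemidef_add (hB.add hWpsd) hzpd
  have h1d : IsUnit M1.det := (isUnit_iff_isUnit_det _).mp pd1.isUnit
  have h2d : IsUnit M2.det := (isUnit_iff_isUnit_det _).mp pd2.isUnit
  -- resolvent identity
  have hres : M1⁻¹ - M2⁻¹ = M1⁻¹ * W * M2⁻¹ := by
    have e0 : M2 - M1 = W := by rw [hM2def, hM1def]; abel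
    calc M1⁻¹ - M2⁻¹ = M1⁻¹ * (M2 * M2⁻¹) - (M1⁻¹ * M1) * M2⁻¹ := by
          rw [mul_nonsing_inv _ h2d, nonsing_inv_mul _ h1d, mul_one, one_mul]
      _ = M1⁻¹ * (M2 - M1) * M2⁻¹ := by noncomm_ring
      _ = M1⁻¹ * W * M2⁻¹ := by rw [e0]
  set u : Fin N → ℂ := M1⁻¹ *ᵥ v with hudef
  have hMu : M1 *ᵥ u = v := by
    rw [hudef, mulVec_mulVec, mul_nonsing_inv _ h1d, one_mulVec]
  set α : ℂ := star v ⬝ᵥ u with hαdef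
  have hα0 : 0 ≤ α := pd1.inv.posSemidef.dotProduct_mulVec_nonneg v
  have hαre : α = ((α.re : ℝ) : ℂ) := by
    rw [Complex.nonneg_iff] at hα0
    exact Complex.ext rfl (by simp [hα0.2.symm])
  have ha0 : 0 ≤ α.re := (Complex.nonneg_iff.mp hα0).1
  have h1α : (1 + α) ≠ 0 := by
    intro h
    have := congrArg Complex.re h
    simp at this
    linarith
  -- Sherman-Morrison
  have hM2u : M2 *ᵥ u = (1 + α) • v := by
    have e1 : M2 = M1 + W := by rw [hM2def, hM1def]; abel
    rw [e1, add_mulVec, hMu, hWdef, aux_vecMulVec_mulVec, ← hαdef, add_smul, one_smul]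
  have hw2 : M2⁻¹ *ᵥ v = (1 + α)⁻¹ • u := by
    have e1 : M2⁻¹ *ᵥ (M2 *ᵥ u) = u := by
      rw [mulVec_mulVec, nonsing_inv_mul _ h2d, one_mulVec]
    rw [hM2u, mulVec_smul] at e1
    rw [← e1, smul_smul, inv_mul_cancel₀ h1α, one_smul]
  -- hermitian inverses
  have hH2 : M2⁻¹.IsHermitian := pd2.inv.isHermitian
  -- trace computation
  have htr : (((M1⁻¹ - M2⁻¹) * A).trace)
      = starRingEnd ℂ ((1 + α)⁻¹) * (star u ⬝ᵥ (A *ᵥ u)) := by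
    rw [hres]
    have e1 : M1⁻¹ * W * M2⁻¹ * A = M1⁻¹ * (W * (M2⁻¹ * A)) := by noncomm_ring
    rw [e1, trace_mul_comm]
    have e2 : W * (M2⁻¹ * A) * M1⁻¹ = W * (M2⁻¹ * (A * M1⁻¹)) := by noncomm_ring
    rw [e2, hWdef, aux_trace_vecMulVec_mul]
    rw [← mulVec_mulVec, dotProduct_mulVec, ← hH2.eq]
    rw [← star_mulVec, hw2]
    rw [star_smul, smul_dotProduct]
    rw [← mulVec_mulVec, ← hudef]
    simp only [smul_eq_mul, RCLike.star_def]
  rw [htr]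
  -- norms
  set u' : EuclideanSpace ℂ (Fin N) := (WithLp.equiv 2 (Fin N → ℂ)).symm u with hu'def
  have hkey1 : ‖star u ⬝ᵥ (A *ᵥ u)‖ ≤ ‖A‖ * ‖u'‖ ^ 2 := by
    have hinner := norm_inner_le_norm (𝕜 := ℂ) u'
      ((WithLp.equiv 2 (Fin N → ℂ)).symm (A *ᵥ u))
    rw [EuclideanSpace.inner_eq_star_dotProduct, dotProduct_comm] at hinner
    have hAv : ‖(WithLp.equiv 2 (Fin N → ℂ)).symm (A *ᵥ u)‖ ≤ ‖A‖ * ‖u'‖ := by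
      exact A.l2_opNorm_mulVec u'
    calc ‖star u ⬝ᵥ (A *ᵥ u)‖
        = ‖(star u ⬝ᵥ (A *ᵥ u) : ℂ)‖ := rfl
      _ ≤ ‖u'‖ * ‖(WithLp.equiv 2 (Fin N → ℂ)).symm (A *ᵥ u)‖ := hinner
      _ ≤ ‖u'‖ * (‖A‖ * ‖u'‖) := by
          exact mul_le_mul_of_nonneg_left hAv (norm_nonneg _)
      _ = ‖A‖ * ‖u'‖ ^ 2 := by ring
  have hnormu : ‖u'‖ ^ 2 = (star u ⬝ᵥ u).re := by
    have := @inner_self_eq_norm_sq ℂ _ _ _ _ u'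
    rw [EuclideanSpace.inner_eq_star_dotProduct, dotProduct_comm] at this
    exact this.symm
  have hkey2 : ‖u'‖ ^ 2 ≤ α.re / (-z) := by
    have hBu : 0 ≤ (star u ⬝ᵥ (B *ᵥ u)).re := (Complex.nonneg_iff.mp (hB.dotProduct_mulVec_nonneg u)).1
    have hM1u : star u ⬝ᵥ (M1 *ᵥ u) = star u ⬝ᵥ (B *ᵥ u) - (z : ℂ) * (star u ⬝ᵥ u) := by
      rw [hM1def, sub_mulVec, dotProduct_sub, smul_mulVec, one_mulVec,
        dotProduct_smul, smul_eq_mul]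
    have huv : star u ⬝ᵥ v = ((α.re : ℝ) : ℂ) := by
      rw [aux_star_dot, ← hαdef, hαre]
      simp
    have hre : α.re = (star u ⬝ᵥ (B *ᵥ u)).re + (-z) * (star u ⬝ᵥ u).re := by
      rw [hMu, huv] at hM1u
      have h3 := congrArg Complex.re hM1u
      simp only [Complex.ofReal_re, Complex.sub_re, Complex.re_ofReal_mul] at h3
      rw [h3]; ring
    have hzpos : (0 : ℝ) < -z := by linarith
    rw [hnormu, _root_.le_div_iff₀ hzpos]
    nlinarith [hnormu, sq_nonneg ‖u'‖]
  -- final bound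
  have habs : ‖starRingEnd ℂ ((1 + α)⁻¹)‖ = (1 + α.re)⁻¹ := by
    have h5 : (1 : ℂ) + α = (((1 + α.re : ℝ)) : ℂ) := by
      conv_lhs => rw [hαre]
      push_cast
      ring
    rw [Complex.norm_conj, norm_inv, h5, Complex.norm_real, Real.norm_eq_abs, abs_of_nonneg (by linarith)]
  rw [norm_mul, habs]
  have hA0 : (0 : ℝ) ≤ ‖A‖ := norm_nonneg _
  have hzpos : (0 : ℝ) < -z := by linarith
  have h1a : (0 : ℝ) < 1 + α.re := by linarith
  calc (1 + α.re)⁻¹ * ‖star u ⬝ᵥ (A *ᵥ u)‖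
      ≤ (1 + α.re)⁻¹ * (‖A‖ * (α.re / (-z))) := by
        refine mul_le_mul_of_nonneg_left (le_trans hkey1 ?_) (by positivity)
        exact mul_le_mul_of_nonneg_left hkey2 hA0
    _ = ‖A‖ * (α.re / ((1 + α.re) * (-z))) := by
        field_simp
    _ ≤ ‖A‖ * (1 / (-z)) := by
        refine mul_le_mul_of_nonneg_left ?_ hA0
        rw [div_le_div_iff₀ (by positivity) hzpos]
        nlinarith
    _ = ‖A‖ / |z| := by rw [abs_of_neg hz]; ring
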